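/- Let p be a prime, A a local integral domain that is a Z_(p)-algebra whose residue field has characteristic p, and K the fraction field of A. Let M be a free A-module of finite rank, S a finite subset of Z injecting into Z/pZ, and suppose M ⊗_A K = ⊕_{i ∈ S} M_{i,K} is a direct sum decomposition of K-vector spaces. Suppose h is an A-linear endomorphism of M whose K-linear extension acts on each M_{i,K} as multiplication by the integer i. Then, setting M_i := M ∩ M_{i,K} (intersection inside M ⊗_A K), the natural map ⊕_{i ∈ S} M_i → M is an isomorphism of A-modules. -/

import Mathlib

open TensorProduct

/-- Let `p` be a prime, `A` a local integral domain which is a `ℤ_(p)`-algebra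
(equivalently every integer prime to `p` is a unit in `A`) with residue field of characteristic
`p`, and `K` its fraction field.  Let `M` be a finite free `A`-module, `S ⊂ ℤ` a finite set
injecting into `ℤ/pℤ`, and suppose `M ⊗_A K = ⊕_{i ∈ S} M_{i,K}` is a direct sum decomposition
into `K`-subspaces.  Suppose `h ∈ End_A(M)` is such that its `K`-linear extension acts on each
`M_{i,K}` as multiplication by `i`.  Then, with `M_i := M ∩ M_{i,K}` (the preimage of `M_{i,K}`
under `M → M ⊗_A K`), the natural map `⊕_{i ∈ S} M_i → M` is an isomorphism, i.e. the `M_i`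
form an internal direct sum decomposition of `M`. -/
theorem stmt_3 (p : ℕ) (hp : p.Prime)
    (A : Type*) [CommRing A] [IsDomain A] [IsLocalRing A]
    (hA : ∀ n : ℤ, ¬ (p : ℤ) ∣ n → IsUnit (n : A))
    (hres : CharP (IsLocalRing.ResidueField A) p)
    (K : Type*) [Field K] [Algebra A K] [IsFractionRing A K]
    (M : Type*) [AddCommGroup M] [Module A M] [Module.Free A M] [Module.Finite A M]
    (S : Finset ℤ)
    (hS : ∀ a ∈ S, ∀ b ∈ S, (a : ZMod p) = (b : ZMod p) → a = b)
    (W : S → Submodule K (K ⊗[A] M))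
    (hW : DirectSum.IsInternal W)
    (h : Module.End A M)
    (hh : ∀ (i : S) (v : K ⊗[A] M), v ∈ W i →
      LinearMap.baseChange K h v = ((i : ℤ) : K) • v) :
    DirectSum.IsInternal (fun i : S =>
      (Submodule.restrictScalars A (W i)).comap (TensorProduct.mk A K M 1)) := by
  classical
  set f : M →ₗ[A] K ⊗[A] M := TensorProduct.mk A K M 1 with hfdef
  -- injectivity of M → K ⊗ M
  have hf : Function.Injective f := by
    have h1 : Function.Injective ((Algebra.linearMap A K).rTensor M) :=
      Module.Flat.rTensor_preserves_injective_linearMap _ (IsFractionRing.injective A K)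
    have h2 : (f : M → K ⊗[A] M) =
        ((Algebra.linearMap A K).rTensor M) ∘ (TensorProduct.lid A M).symm := by
      funext x
      simp [f]
    rw [h2]
    exact h1.comp (TensorProduct.lid A M).symm.injective
  -- differences are units
  have hunit : ∀ i k : S, i ≠ k → IsUnit ((((i : ℤ) - (k : ℤ)) : ℤ) : A) := by
    intro i k hik
    refine hA _ ?_
    intro hd
    have h0 : (((i : ℤ) - (k : ℤ) : ℤ) : ZMod p) = 0 :=
      (ZMod.intCast_zmod_eq_zero_iff_dvd _ p).2 hd
    push_cast at h0
    have : ((i : ℤ) : ZMod p) = ((k : ℤ) : ZMod p) := by linear_combination h0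
    exact hik (Subtype.ext (hS _ i.2 _ k.2 this))
  -- the denominators
  set val : S → A := fun i => ∏ j ∈ Finset.univ.erase i, ((((i : ℤ) - (j : ℤ)) : ℤ) : A)
    with hval
  have hvu : ∀ i, IsUnit (val i) := by
    intro i
    refine Finset.prod_induction _ IsUnit (fun a b => IsUnit.mul) isUnit_one ?_
    intro j hj
    exact hunit i j (Finset.ne_of_mem_erase hj).symm
  set c : S → A := fun i => ↑(hvu i).unit⁻¹ with hc
  have hcval : ∀ i, c i * val i = 1 := fun i => (hvu i).val_inv_mul
  -- the interpolation operators
  set P : S → Polynomial A := fun i =>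
    ∏ j ∈ Finset.univ.erase i, (Polynomial.X - Polynomial.C (((j : ℤ) : A))) with hP
  set q : S → Module.End A M := fun i => Polynomial.aeval h (P i) with hq
  set e : S → Module.End A M := fun i => c i • q i with he
  -- key computation on each W k
  set B : Module.End K (K ⊗[A] M) := LinearMap.baseChange K h with hB
  have L1 : ∀ (T : Finset S) (k : S) (v : K ⊗[A] M), v ∈ W k →
      Polynomial.aeval B (∏ j ∈ T, (Polynomial.X - Polynomial.C (((j : ℤ) : A)))) v =
        (((∏ j ∈ T, ((k : ℤ) - (j : ℤ))) : ℤ) : K) • v := by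
    intro T
    induction T using Finset.induction_on with
    | empty => intro k v hv; simp
    | @insert a T ha ih =>
      intro k v hv
      rw [Finset.prod_insert ha, Finset.prod_insert ha, map_mul,
        Module.End.mul_apply, ih k v hv]
      have hv' : (((∏ j ∈ T, ((k : ℤ) - (j : ℤ))) : ℤ) : K) • v ∈ W k :=
        Submodule.smul_mem _ _ hv
      rw [map_sub, Polynomial.aeval_X, Polynomial.aeval_C, LinearMap.sub_apply,
        hB, hh k _ hv', Module.algebraMap_end_apply]
      have : (((a : ℤ) : A)) • ((((∏ j ∈ T, ((k : ℤ) - (j : ℤ))) : ℤ) : K) • v)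
          = (((a : ℤ) : K)) • ((((∏ j ∈ T, ((k : ℤ) - (j : ℤ))) : ℤ) : K) • v) := by
        rw [← algebraMap_smul K (((a : ℤ) : A)), map_intCast]
      rw [this, smul_smul, smul_smul, ← sub_smul]
      congr 1
      push_cast
      ring
  have L2 : ∀ (i k : S) (v : K ⊗[A] M), v ∈ W k →
      LinearMap.baseChange K (e i) v = if i = k then v else 0 := by
    intro i k v hv
    have : LinearMap.baseChange K (e i) v
        = algebraMap A K (c i) • ((((∏ j ∈ Finset.univ.erase i, ((k : ℤ) - (j : ℤ))) : ℤ) : K) • v) := by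
      rw [he]
      simp only [LinearMap.baseChange_smul, LinearMap.smul_apply]
      rw [hq]
      have hbc : LinearMap.baseChange K (Polynomial.aeval h (P i))
          = Polynomial.aeval B (P i) := by
        rw [hB]
        have h2 := (Polynomial.aeval_algHom_apply (Module.End.baseChangeHom A K M) h (P i)).symm
        exact h2
      rw [hbc, hP, L1 _ k v hv, algebraMap_smul]
    by_cases hik : i = k
    · subst hik
      rw [if_pos rfl, this, smul_smul]
      have : algebraMap A K (c i) * (((∏ j ∈ Finset.univ.erase i, ((i : ℤ) - (j : ℤ))) : ℤ) : K)
          = algebraMap A K (c i * val i) := by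
        rw [map_mul]
        congr 1
        rw [hval, map_prod]
        push_cast [map_intCast]
        rfl
      rw [this, hcval, map_one, one_smul]
    · rw [if_neg hik, this]
      have hk : k ∈ Finset.univ.erase i := Finset.mem_erase.2 ⟨fun hh' => hik hh'.symm, Finset.mem_univ _⟩
      rw [Finset.prod_eq_zero hk (by ring)]
      simp
  -- extend to all of K ⊗ M
  have Ltop : ∀ v : K ⊗[A] M, v ∈ (⊤ : Submodule K (K ⊗[A] M)) := fun v => trivial
  have hWtop : (⨆ k, W k) = ⊤ := hW.submodule_iSup_eq_top
  have L3 : ∀ (i : S) (v : K ⊗[A] M), LinearMap.baseChange K (e i) v ∈ W i := by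
    intro i v
    have hv : v ∈ ⨆ k, W k := hWtop ▸ Ltop v
    refine Submodule.iSup_induction
      (motive := fun y => LinearMap.baseChange K (e i) y ∈ W i) W hv (fun k x hx => ?_) (by simp) ?_
    · show LinearMap.baseChange K (e i) x ∈ W i
      rw [L2 i k x hx]
      split
      · next hik => exact hik ▸ hx
      · exact Submodule.zero_mem _
    · intro x y hx hy
      show LinearMap.baseChange K (e i) (x + y) ∈ W i
      rw [map_add]; exact Submodule.add_mem _ hx hy
  have L4 : ∀ v : K ⊗[A] M, (∑ i, LinearMap.baseChange K (e i) v) = v := by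
    intro v
    have hv : v ∈ ⨆ k, W k := hWtop ▸ Ltop v
    refine Submodule.iSup_induction
      (motive := fun y => (∑ i, LinearMap.baseChange K (e i) y) = y) W hv (fun k x hx => ?_) (by simp) ?_
    · show (∑ i, LinearMap.baseChange K (e i) x) = x
      calc (∑ i, LinearMap.baseChange K (e i) x) = ∑ i, if i = k then x else 0 := by
            exact Finset.sum_congr rfl fun i _ => L2 i k x hx
        _ = x := by simp
    · intro x y hx hy
      show (∑ i, LinearMap.baseChange K (e i) (x + y)) = x + y
      simp only [map_add, Finset.sum_add_distrib]
      rw [hx, hy]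
  -- membership of e i x in the comap
  have hmem : ∀ (i : S) (x : M), e i x ∈
      (Submodule.restrictScalars A (W i)).comap f := by
    intro i x
    have : f (e i x) = LinearMap.baseChange K (e i) (f x) := by
      simp [f]
    simp only [Submodule.mem_comap, Submodule.restrictScalars_mem, this]
    exact L3 i (f x)
  -- surjectivity
  have hsup : (⨆ i, (Submodule.restrictScalars A (W i)).comap f) = ⊤ := by
    rw [eq_top_iff]
    rintro x -
    have hx : x = ∑ i, e i x := by
      apply hf
      rw [map_sum]
      have hfe : ∀ i : S, f (e i x) = LinearMap.baseChange K (e i) (f x) := by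
        intro i; simp [f]
      rw [Finset.sum_congr rfl fun i _ => hfe i, L4 (f x)]
    rw [hx]
    exact Submodule.sum_mem _ fun i _ => Submodule.mem_iSup_of_mem i (hmem i x)
  -- independence
  have hind : iSupIndep (fun i : S => (Submodule.restrictScalars A (W i)).comap f) := by
    intro i
    rw [disjoint_iff, eq_bot_iff]
    rintro x ⟨hx1, hx2⟩
    have hle : (⨆ (j) (_ : j ≠ i), (Submodule.restrictScalars A (W j)).comap f) ≤
        (Submodule.restrictScalars A (⨆ (j) (_ : j ≠ i), W j)).comap f := by
      refine iSup₂_le fun j hj => ?_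
      intro y hy
      simp only [Submodule.mem_comap, Submodule.restrictScalars_mem] at hy ⊢
      exact Submodule.mem_iSup_of_mem j (Submodule.mem_iSup_of_mem hj hy)
    have hfx1 : f x ∈ W i := hx1
    have hfx2 : f x ∈ ⨆ (j) (_ : j ≠ i), W j := hle hx2
    have : f x ∈ (W i ⊓ ⨆ (j) (_ : j ≠ i), W j) := ⟨hfx1, hfx2⟩
    rw [disjoint_iff.1 (hW.submodule_iSupIndep i)] at this
    have hx0 : x = 0 := hf (by simpa using this)
    simp [hx0]
  exact DirectSum.isInternal_submodule_of_iSupIndep_of_iSup_eq_top hind hsup
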